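/- For the reduced expressions u_n = s_{1,1} s_{2,1} ... s_{n,1} and v_n = s_{n,1} s_{n,2} ... s_{n,n-1} of the flip permutation, I₃(S(u_n),S(v_n)) = C(n,3) and I₂,₂(S(u_n),S(v_n)) = 3·C(n,4), hence dist(u_n,v_n) ≥ C(n,3) + 3·C(n,4), which is n⁴/8 + O(n³). -/

import Mathlib

open scoped Classical

noncomputable section

/-- adjacent transposition `s i = (i, i+1)` acting on ℕ (1-indexed positions) -/
def s (i : ℕ) : Equiv.Perm ℕ := Equiv.swap i (i + 1)

/-- permutation represented by a word; letters are applied left to right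
(`wperm (u ++ v) = wperm v * wperm u`, i.e. `u` first, then `v`). -/
def wperm (w : List ℕ) : Equiv.Perm ℕ := ((w.map s).reverse).prod

/-- `w` is an `n`-expression: a word in the letters `s 1, ..., s (n-1)` -/
def IsExpr (n : ℕ) (w : List ℕ) : Prop := ∀ i ∈ w, 1 ≤ i ∧ i + 1 ≤ n

/-- set of inversions of a permutation of `{1,...,n}` -/
def invSet (n : ℕ) (π : Equiv.Perm ℕ) : Finset (ℕ × ℕ) :=
  (Finset.Icc 1 n ×ˢ Finset.Icc 1 n).filter (fun pq => pq.1 < pq.2 ∧ π pq.2 < π pq.1)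

/-- a reduced `n`-expression: its length equals the inversion number of the
permutation it represents -/
def ReducedExpr (n : ℕ) (w : List ℕ) : Prop :=
  IsExpr n w ∧ w.length = (invSet n (wperm w)).card

/-- one application of a braid relation `s i s j s i = s j s i s j`, `|i-j| = 1` -/
inductive StepI : List ℕ → List ℕ → Prop
  | mk (a b : List ℕ) (i j : ℕ) (h : i + 1 = j ∨ j + 1 = i) :
      StepI (a ++ i :: j :: i :: b) (a ++ j :: i :: j :: b)

/-- one application of a commutation relation `s i s j = s j s i`, `|i-j| ≥ 2` -/
inductive StepII : List ℕ → List ℕ → Prop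
  | mk (a b : List ℕ) (i j : ℕ) (h : i + 2 ≤ j ∨ j + 2 ≤ i) :
      StepII (a ++ i :: j :: b) (a ++ j :: i :: b)

def BraidStep (u v : List ℕ) : Prop := StepI u v ∨ StepII u v

/-- `c` is a derivation from `u` to `v` by braid relations -/
def IsDeriv (u v : List ℕ) (c : List (List ℕ)) : Prop :=
  c.Chain' BraidStep ∧ c.head? = some u ∧ c.getLast? = some v

/-- combinatorial distance: minimal number of braid relations transforming `u` into `v` -/
def dist (u v : List ℕ) : ℕ :=
  sInf {k | ∃ c, IsDeriv u v c ∧ c.length = k + 1}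

/-- the word `s_{j,i} = s_{j-1} s_{j-2} ... s_i` (empty if `j ≤ i`) -/
def sji (j i : ℕ) : List ℕ := (List.range (j - i)).map (fun k => j - 1 - k)

/-- the normal word `s_{1,f(1)} s_{2,f(2)} ... s_{n,f(n)}` -/
def normalWord (n : ℕ) (f : ℕ → ℕ) : List ℕ :=
  ((List.range n).map (fun k => sji (k + 1) (f (k + 1)))).flatten

/-- `f : {1,...,n} → {1,...,n}` with `1 ≤ f i ≤ i` for all `i` -/
def IsNormalFun (n : ℕ) (f : ℕ → ℕ) : Prop := ∀ i ∈ Finset.Icc 1 n, 1 ≤ f i ∧ f i ≤ i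

/-- names of the successive crossings: the name of a letter is the pair of starting
positions of the two strands crossing there -/
def namesAux : Equiv.Perm ℕ → List ℕ → List (Finset ℕ)
  | _, [] => []
  | π, i :: rest => ({π⁻¹ i, π⁻¹ (i + 1)} : Finset ℕ) :: namesAux (s i * π) rest

/-- the name sequence `S(w)` of a word -/
def names (w : List ℕ) : List (Finset ℕ) := namesAux 1 w

/-- two entries occur in the same relative order in `S` and `S'` -/
def sameOrder (S S' : List (Finset ℕ)) (a b : Finset ℕ) : Prop :=
  (S.idxOf a < S.idxOf b) ↔ (S'.idxOf a < S'.idxOf b)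

/-- `I₃(S,S')`: number of triples `{p,q,r} ⊆ {1,...,n}` such that the relative order of
the three pairs `{p,q}, {p,r}, {q,r}` is not the same in `S` and `S'` -/
def I3 (n : ℕ) (S S' : List (Finset ℕ)) : ℕ :=
  (((Finset.Icc 1 n).powersetCard 3).filter (fun t =>
    ¬ ∀ a ∈ t.powersetCard 2, ∀ b ∈ t.powersetCard 2, sameOrder S S' a b)).card

/-- `I₂,₂(S,S')`: number of unordered pairs of disjoint pairs in `{1,...,n}` whose
relative order is not the same in `S` and `S'` -/
def I22 (n : ℕ) (S S' : List (Finset ℕ)) : ℕ :=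
  ((((Finset.Icc 1 n).powersetCard 2).powersetCard 2).filter (fun P =>
    (∀ a ∈ P, ∀ b ∈ P, a ≠ b → Disjoint a b) ∧
    ¬ ∀ a ∈ P, ∀ b ∈ P, sameOrder S S' a b)).card

/-- total number of unordered pairs of entries whose relative order differs -/
def InvCount (S S' : List (Finset ℕ)) : ℕ :=
  ((S.toFinset.powersetCard 2).filter (fun P =>
    ¬ ∀ a ∈ P, ∀ b ∈ P, sameOrder S S' a b)).card

/-- number of type I steps in a derivation -/
def countStepsI (c : List (List ℕ)) : ℕ :=
  ((Finset.range (c.length - 1)).filter (fun k => StepI (c.getD k []) (c.getD (k + 1) []))).card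

/-- number of type II steps in a derivation -/
def countStepsII (c : List (List ℕ)) : ℕ :=
  ((Finset.range (c.length - 1)).filter (fun k => StepII (c.getD k []) (c.getD (k + 1) []))).card

/-- position of the strand starting at position `p` after the first `k` letters of `w` -/
def strandPos (w : List ℕ) (p k : ℕ) : ℕ := wperm (w.take k) p

/-- number of unit squares to the right of the `n`-th strand in the braid diagram of `w`,
drawn on an `(n-1) × length w` grid -/
def area (n : ℕ) (w : List ℕ) : ℕ :=
  ((List.range w.length).map (fun k => n - max (strandPos w n k) (strandPos w n (k + 1)))).sum

/-- `u_n = s_{1,1} s_{2,1} ... s_{n,1}` -/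
def uWord (n : ℕ) : List ℕ := ((List.range n).map (fun k => sji (k + 1) 1)).flatten

/-- `v_n = s_{n,1} s_{n,2} ... s_{n,n-1}` -/
def vWord (n : ℕ) : List ℕ := ((List.range (n - 1)).map (fun k => sji n (k + 1))).flatten


lemma wperm_nil : wperm [] = 1 := rfl
lemma wperm_cons (i : ℕ) (w : List ℕ) : wperm (i :: w) = wperm w * s i := by simp [wperm]
lemma wperm_append (x y : List ℕ) : wperm (x ++ y) = wperm y * wperm x := by simp [wperm]
lemma namesAux_append (π : Equiv.Perm ℕ) (x y : List ℕ) :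
    namesAux π (x ++ y) = namesAux π x ++ namesAux (wperm x * π) y := by
  induction x generalizing π with
  | nil => simp [namesAux, wperm_nil]
  | cons i rest ih =>
      show _ :: namesAux (s i * π) (rest ++ y) = _
      rw [ih (s i * π)]
      simp [namesAux, wperm_cons, mul_assoc]
lemma s_inv (i : ℕ) : (s i)⁻¹ = s i := by simp [s]
lemma s_apply (i x : ℕ) : s i x = if x = i then i + 1 else if x = i + 1 then i else x := by
  simp [s, Equiv.swap_apply_def]
lemma comm_perm {i j : ℕ} (h : i + 2 ≤ j ∨ j + 2 ≤ i) : s i * s j = s j * s i := by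
  ext x; simp only [Equiv.Perm.mul_apply, s_apply]; split_ifs <;> omega
lemma s_conj (σ : Equiv.Perm ℕ) (i : ℕ) : σ * s i * σ⁻¹ = Equiv.swap (σ i) (σ (i+1)) :=
  (Equiv.swap_apply_apply σ i (i+1)).symm
lemma braid_perm {i j : ℕ} (h : i + 1 = j ∨ j + 1 = i) : s i * s j * s i = s j * s i * s j := by
  have key : ∀ k : ℕ, s k * s (k+1) * s k = s (k+1) * s k * s (k+1) := by
    intro k
    have h1 : s k * s (k+1) * (s k)⁻¹ = Equiv.swap (s k (k+1)) (s k (k+2)) := by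
      have := s_conj (s k) (k+1); simpa [s] using this
    have h2 : s (k+1) * s k * (s (k+1))⁻¹ = Equiv.swap (s (k+1) k) (s (k+1) (k+1)) := by
      have := s_conj (s (k+1)) k; simpa [s] using this
    have e1 : s k (k+1) = k := by simp [s, Equiv.swap_apply_right]
    have e2 : s k (k+2) = k+2 := by simp only [s]; rw [Equiv.swap_apply_of_ne_of_ne] <;> omega
    have e3 : s (k+1) k = k := by simp only [s]; rw [Equiv.swap_apply_of_ne_of_ne] <;> omega
    have e4 : s (k+1) (k+1) = k+2 := by simp [s, Equiv.swap_apply_left]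
    rw [s_inv] at h1 h2; rw [e1, e2] at h1; rw [e3, e4] at h2
    calc s k * s (k+1) * s k = Equiv.swap k (k+2) := h1
    _ = s (k+1) * s k * s (k+1) := h2.symm
  rcases h with h | h
  · subst h; exact key i
  · subst h; exact (key j).symm

-- NEW BATCH
lemma namesAux_cons (π : Equiv.Perm ℕ) (i : ℕ) (rest : List ℕ) :
    namesAux π (i :: rest) = ({π⁻¹ i, π⁻¹ (i + 1)} : Finset ℕ) :: namesAux (s i * π) rest := rfl

lemma sval (i x y : ℕ) (h : (x = i ∧ y = i+1) ∨ (x = i+1 ∧ y = i) ∨ (x ≠ i ∧ x ≠ i+1 ∧ y = x)) :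
    s i x = y := by
  rw [s_apply]; split_ifs <;> omega

lemma inv_mul_apply (π : Equiv.Perm ℕ) (σ : Equiv.Perm ℕ) (x : ℕ) :
    (σ * π)⁻¹ x = π⁻¹ (σ⁻¹ x) := by simp


lemma block1 (π : Equiv.Perm ℕ) (k : ℕ) :
    namesAux π [k, k+1, k] =
      [({π⁻¹ k, π⁻¹ (k+1)} : Finset ℕ), {π⁻¹ k, π⁻¹ (k+2)}, {π⁻¹ (k+1), π⁻¹ (k+2)}] := by
  have e1 : (s k * π)⁻¹ (k+1) = π⁻¹ k := by
    rw [inv_mul_apply, s_inv, sval k (k+1) k (by omega)]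
  have e2 : (s k * π)⁻¹ (k+1+1) = π⁻¹ (k+2) := by
    rw [inv_mul_apply, s_inv, sval k (k+2) (k+2) (by omega)]
  have e3 : (s (k+1) * (s k * π))⁻¹ k = π⁻¹ (k+1) := by
    rw [inv_mul_apply, inv_mul_apply, s_inv, s_inv,
      sval (k+1) k k (by omega), sval k k (k+1) (by omega)]
  have e4 : (s (k+1) * (s k * π))⁻¹ (k+1) = π⁻¹ (k+2) := by
    rw [inv_mul_apply, inv_mul_apply, s_inv, s_inv,
      sval (k+1) (k+1) (k+2) (by omega), sval k (k+2) (k+2) (by omega)]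
  simp only [namesAux_cons, namesAux, e1, e2, e3, e4]

lemma block2 (π : Equiv.Perm ℕ) (k : ℕ) :
    namesAux π [k+1, k, k+1] =
      [({π⁻¹ (k+1), π⁻¹ (k+2)} : Finset ℕ), {π⁻¹ k, π⁻¹ (k+2)}, {π⁻¹ k, π⁻¹ (k+1)}] := by
  have e1 : (s (k+1) * π)⁻¹ k = π⁻¹ k := by
    rw [inv_mul_apply, s_inv, sval (k+1) k k (by omega)]
  have e2 : (s (k+1) * π)⁻¹ (k+1) = π⁻¹ (k+2) := by
    rw [inv_mul_apply, s_inv, sval (k+1) (k+1) (k+2) (by omega)]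
  have e3 : (s k * (s (k+1) * π))⁻¹ (k+1) = π⁻¹ k := by
    rw [inv_mul_apply, inv_mul_apply, s_inv, s_inv,
      sval k (k+1) k (by omega), sval (k+1) k k (by omega)]
  have e4 : (s k * (s (k+1) * π))⁻¹ (k+1+1) = π⁻¹ (k+1) := by
    rw [inv_mul_apply, inv_mul_apply, s_inv, s_inv,
      sval k (k+2) (k+2) (by omega), sval (k+1) (k+2) (k+1) (by omega)]
  simp only [namesAux_cons, namesAux, e1, e2, e3, e4]

lemma wperm_three (i j k : ℕ) : wperm [i, j, k] = s k * (s j * s i) := by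
  simp [wperm, mul_assoc]

lemma wperm_two (i j : ℕ) : wperm [i, j] = s j * s i := by
  simp [wperm]

lemma blockII (π : Equiv.Perm ℕ) {i j : ℕ} (h : i + 2 ≤ j ∨ j + 2 ≤ i) :
    namesAux π [i, j] = [({π⁻¹ i, π⁻¹ (i+1)} : Finset ℕ), {π⁻¹ j, π⁻¹ (j+1)}] := by
  have e1 : (s i * π)⁻¹ j = π⁻¹ j := by
    rw [inv_mul_apply, s_inv, sval i j j (by omega)]
  have e2 : (s i * π)⁻¹ (j+1) = π⁻¹ (j+1) := by
    rw [inv_mul_apply, s_inv, sval i (j+1) (j+1) (by omega)]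
  simp only [namesAux_cons, namesAux, e1, e2]

lemma names_stepI {w w' : List ℕ} (h : StepI w w') :
    ∃ A B, ∃ p q r : ℕ, p ≠ q ∧ p ≠ r ∧ q ≠ r ∧
      names w = A ++ [({p, q} : Finset ℕ), {p, r}, {q, r}] ++ B ∧
      names w' = A ++ [({q, r} : Finset ℕ), {p, r}, {p, q}] ++ B := by
  rcases h with ⟨a, b, i, j, hij⟩
  have hsplit : ∀ x y z : ℕ, a ++ x :: y :: z :: b = a ++ [x, y, z] ++ b := by
    intro x y z; simp
  have hperm : wperm [i, j, i] = wperm [j, i, j] := by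
    rw [wperm_three, wperm_three, ← mul_assoc, ← mul_assoc, braid_perm hij.symm]
  have expand : ∀ x y z : ℕ, names (a ++ x :: y :: z :: b) =
      namesAux 1 a ++ namesAux (wperm a) [x, y, z] ++
        namesAux (wperm [x, y, z] * wperm a) b := by
    intro x y z
    rw [hsplit, names, namesAux_append, namesAux_append, wperm_append, mul_one, mul_one]
  set π := wperm a with hπ
  have hinj : Function.Injective (π⁻¹ : Equiv.Perm ℕ) := Equiv.injective _
  rcases hij with hij | hij
  · subst hij
    refine ⟨namesAux 1 a, namesAux (wperm [i, i+1, i] * π) b,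
      π⁻¹ i, π⁻¹ (i+1), π⁻¹ (i+2), ?_, ?_, ?_, ?_, ?_⟩
    · intro hc; have := hinj hc; omega
    · intro hc; have := hinj hc; omega
    · intro hc; have := hinj hc; omega
    · rw [expand, block1]
    · rw [expand, block2, hperm]
  · subst hij
    refine ⟨namesAux 1 a, namesAux (wperm [j+1, j, j+1] * π) b,
      π⁻¹ (j+2), π⁻¹ (j+1), π⁻¹ j, ?_, ?_, ?_, ?_, ?_⟩
    · intro hc; have := hinj hc; omega
    · intro hc; have := hinj hc; omega
    · intro hc; have := hinj hc; omega
    · rw [expand, block2]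
      rw [Finset.pair_comm (π⁻¹ (j+1)) (π⁻¹ (j+2)),
          Finset.pair_comm (π⁻¹ j) (π⁻¹ (j+2)),
          Finset.pair_comm (π⁻¹ j) (π⁻¹ (j+1))]
    · rw [expand, block1, ← hperm]
      rw [Finset.pair_comm (π⁻¹ (j+1)) (π⁻¹ (j+2)),
          Finset.pair_comm (π⁻¹ j) (π⁻¹ (j+2)),
          Finset.pair_comm (π⁻¹ j) (π⁻¹ (j+1))]

lemma names_stepII {w w' : List ℕ} (h : StepII w w') :
    ∃ A B, ∃ t1 t2 : Finset ℕ, Disjoint t1 t2 ∧ t1.Nonempty ∧ t2.Nonempty ∧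
      names w = A ++ [t1, t2] ++ B ∧ names w' = A ++ [t2, t1] ++ B := by
  rcases h with ⟨a, b, i, j, hij⟩
  have hsplit : ∀ x y : ℕ, a ++ x :: y :: b = a ++ [x, y] ++ b := by intro x y; simp
  have hperm : wperm [i, j] = wperm [j, i] := by
    rw [wperm_two, wperm_two, comm_perm (Or.symm hij)]
  have expand : ∀ x y : ℕ, names (a ++ x :: y :: b) =
      namesAux 1 a ++ namesAux (wperm a) [x, y] ++ namesAux (wperm [x, y] * wperm a) b := by
    intro x y; rw [hsplit, names, namesAux_append, namesAux_append, wperm_append, mul_one, mul_one]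
  set π := wperm a with hπ
  have hinj : Function.Injective (π⁻¹ : Equiv.Perm ℕ) := Equiv.injective _
  refine ⟨namesAux 1 a, namesAux (wperm [i, j] * π) b,
    {π⁻¹ i, π⁻¹ (i+1)}, {π⁻¹ j, π⁻¹ (j+1)}, ?_, ?_, ?_, ?_, ?_⟩
  · rw [Finset.disjoint_left]
    intro x hx hx'
    simp only [Finset.mem_insert, Finset.mem_singleton] at hx hx'
    rcases hx with h1 | h1 <;> rcases hx' with h2 | h2 <;>
      · rw [h1] at h2; have := hinj h2; omega
  · exact ⟨_, Finset.mem_insert_self _ _⟩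
  · exact ⟨_, Finset.mem_insert_self _ _⟩
  · rw [expand, blockII _ hij]
  · rw [expand, blockII _ (Or.symm hij), hperm]




lemma sameOrder_refl (S S' : List (Finset ℕ)) (a : Finset ℕ) : sameOrder S S' a a :=
  ⟨fun h => absurd h (lt_irrefl _), fun h => absurd h (lt_irrefl _)⟩

section IndexLemmas
variable {α : Type*} [DecidableEq α]

lemma indexOf_mid {A M B : List α} {x : α} (hx : x ∈ M) (hxA : x ∉ A) :
    (A ++ M ++ B).idxOf x = A.length + M.idxOf x ∧
      A.length ≤ (A ++ M ++ B).idxOf x ∧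
      (A ++ M ++ B).idxOf x < A.length + M.length := by
  have h1 : (A ++ M ++ B).idxOf x = A.length + M.idxOf x := by
    rw [List.append_assoc, List.idxOf_append_of_notMem hxA,
      List.idxOf_append_of_mem hx]
  have h2 : M.idxOf x < M.length := List.idxOf_lt_length_iff.2 hx
  exact ⟨h1, by omega, by omega⟩

lemma indexOf_out {A M B : List α} {x : α} (hx : x ∉ M) :
    (A ++ M ++ B).idxOf x = (if x ∈ A then A.idxOf x else A.length + M.length + B.idxOf x) := by
  by_cases hA : x ∈ A
  · rw [List.append_assoc, List.idxOf_append_of_mem hA, if_pos hA]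
  · rw [List.append_assoc, List.idxOf_append_of_notMem hA,
      List.idxOf_append_of_notMem hx, if_neg hA]
    omega

/-- the key order-invariance lemma -/
lemma ord_inv {A M M' B : List α} (hlen : M.length = M'.length)
    (hmem : ∀ y, y ∈ M ↔ y ∈ M') (hnd : (A ++ M ++ B).Nodup)
    {a b : α} (hab : a ∉ M ∨ b ∉ M) :
    ((A ++ M ++ B).idxOf a < (A ++ M ++ B).idxOf b ↔
      (A ++ M' ++ B).idxOf a < (A ++ M' ++ B).idxOf b) := by
  have hAM : (A ++ M).Nodup := ((List.nodup_append).1 hnd).1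
  have hdisj : ∀ x, x ∈ M → x ∉ A := by
    intro x hxM hxA
    exact ((List.nodup_append.1 hAM).2.2) x hxA x hxM rfl
  have hout : ∀ x, x ∉ M → (A ++ M ++ B).idxOf x = (A ++ M' ++ B).idxOf x ∧
      ((A ++ M ++ B).idxOf x < A.length ∨ A.length + M.length ≤ (A ++ M ++ B).idxOf x) := by
    intro x hxM
    have hxM' : x ∉ M' := fun hc => hxM ((hmem x).2 hc)
    rw [indexOf_out hxM, indexOf_out hxM']
    by_cases hA : x ∈ A
    · rw [if_pos hA, if_pos hA]
      exact ⟨rfl, Or.inl (List.idxOf_lt_length_iff.2 hA)⟩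
    · rw [if_neg hA, if_neg hA, hlen]
      exact ⟨rfl, by omega⟩
  by_cases haM : a ∈ M
  · rcases hab with h | hbM
    · exact absurd haM h
    · have ha := indexOf_mid (B := B) haM (hdisj a haM)
      have ha' := indexOf_mid (B := B) ((hmem a).1 haM) (hdisj a haM)
      have hb := hout b hbM
      rw [← hlen] at ha'
      constructor
      · intro h; rw [← hb.1]; rcases hb.2 with h2 | h2 <;> omega
      · intro h; rw [← hb.1] at h; rcases hb.2 with h2 | h2 <;> omega
  · by_cases hbM : b ∈ M
    · have hb := indexOf_mid (B := B) hbM (hdisj b hbM)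
      have hb' := indexOf_mid (B := B) ((hmem b).1 hbM) (hdisj b hbM)
      have ha := hout a haM
      rw [← hlen] at hb'
      constructor
      · intro h; rw [← ha.1]; rcases ha.2 with h2 | h2 <;> omega
      · intro h; rw [← ha.1] at h; rcases ha.2 with h2 | h2 <;> omega
    · rw [(hout a haM).1, (hout b hbM).1]

end IndexLemmas

lemma sameOrder_inv {A M M' B : List (Finset ℕ)} (hlen : M.length = M'.length)
    (hmem : ∀ y, y ∈ M ↔ y ∈ M') (hnd : (A ++ M ++ B).Nodup)
    (T : List (Finset ℕ)) {a b : Finset ℕ} (hab : a ∉ M ∨ b ∉ M) :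
    (sameOrder (A ++ M ++ B) T a b ↔ sameOrder (A ++ M' ++ B) T a b) := by
  unfold sameOrder
  rw [ord_inv hlen hmem hnd hab]

lemma stepI_bound (n : ℕ) (T : List (Finset ℕ)) {w w' : List ℕ} (h : StepI w w')
    (hnd : (names w).Nodup) :
    (names w').Perm (names w) ∧ I3 n (names w) T ≤ I3 n (names w') T + 1 ∧
      I22 n (names w) T = I22 n (names w') T := by
  obtain ⟨A, B, p, q, r, hpq, hpr, hqr, hw, hw'⟩ := names_stepI h
  set t1 : Finset ℕ := {p, q} with ht1
  set t2 : Finset ℕ := {p, r} with ht2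
  set t3 : Finset ℕ := {q, r} with ht3
  set M : List (Finset ℕ) := [t1, t2, t3] with hM
  set M' : List (Finset ℕ) := [t3, t2, t1] with hM'
  have hlen : M.length = M'.length := rfl
  have hmem : ∀ y, y ∈ M ↔ y ∈ M' := by
    intro y; simp only [hM, hM', List.mem_cons, List.not_mem_nil, or_false]; tauto
  have hndw : (A ++ M ++ B).Nodup := by rw [← hw]; exact hnd
  have hMM' : M'.Perm M := by
    have : M' = M.reverse := rfl
    rw [this]; exact List.reverse_perm M
  have hperm : (names w').Perm (names w) := by
    rw [hw, hw']
    exact ((hMM'.append_left A).append_right B)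
  have common : ∀ x ∈ M, ∀ y ∈ M, ¬ Disjoint x y := by
    intro x hx y hy
    simp only [hM, List.mem_cons, List.not_mem_nil, or_false] at hx hy
    rcases hx with rfl | rfl | rfl <;> rcases hy with rfl | rfl | rfl <;>
      · rw [Finset.not_disjoint_iff]
        first
        | exact ⟨p, by simp [ht1, ht2], by simp [ht1, ht2]⟩
        | exact ⟨q, by simp [ht1, ht3], by simp [ht1, ht3]⟩
        | exact ⟨r, by simp [ht2, ht3], by simp [ht2, ht3]⟩
  have union3 : ∀ x ∈ M, ∀ y ∈ M, x ≠ y → ({p, q, r} : Finset ℕ) ⊆ x ∪ y := by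
    intro x hx y hy hxy
    simp only [hM, List.mem_cons, List.not_mem_nil, or_false] at hx hy
    rcases hx with rfl | rfl | rfl <;> rcases hy with rfl | rfl | rfl <;>
      first
      | exact absurd rfl hxy
      | · intro z hz
          simp only [ht1, ht2, ht3, Finset.mem_insert, Finset.mem_singleton,
            Finset.mem_union] at hz ⊢
          tauto
  have hcard3 : ({p, q, r} : Finset ℕ).card = 3 := by
    rw [Finset.card_insert_of_notMem (by simp [hpq, hpr]),
        Finset.card_insert_of_notMem (by simp [hqr]), Finset.card_singleton]
  refine ⟨hperm, ?_, ?_⟩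
  · -- I3 bound
    rw [hw, hw', I3, I3]
    set t0 : Finset ℕ := {p, q, r} with ht0
    have key : ∀ t ∈ (Finset.Icc 1 n).powersetCard 3, t ≠ t0 →
        ((¬ ∀ a ∈ t.powersetCard 2, ∀ b ∈ t.powersetCard 2, sameOrder (A ++ M ++ B) T a b) ↔
         (¬ ∀ a ∈ t.powersetCard 2, ∀ b ∈ t.powersetCard 2, sameOrder (A ++ M' ++ B) T a b)) := by
      intro t ht hne
      have htc : t.card = 3 := (Finset.mem_powersetCard.1 ht).2
      have body : ∀ a ∈ t.powersetCard 2, ∀ b ∈ t.powersetCard 2,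
          (sameOrder (A ++ M ++ B) T a b ↔ sameOrder (A ++ M' ++ B) T a b) := by
        intro a ha b hb
        by_cases hab : a = b
        · subst hab; exact iff_of_true (sameOrder_refl _ _ _) (sameOrder_refl _ _ _)
        · apply sameOrder_inv hlen hmem hndw
          by_contra hc
          push_neg at hc
          have hsub : t0 ⊆ t := by
            refine (union3 a hc.1 b hc.2 hab).trans ?_
            rw [Finset.union_subset_iff]
            exact ⟨(Finset.mem_powersetCard.1 ha).1, (Finset.mem_powersetCard.1 hb).1⟩
          exact hne (Finset.eq_of_subset_of_card_le hsub (by rw [htc, hcard3])).symm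
      constructor
      · intro hcond hcontra
        exact hcond (fun a ha b hb => (body a ha b hb).2 (hcontra a ha b hb))
      · intro hcond hcontra
        exact hcond (fun a ha b hb => (body a ha b hb).1 (hcontra a ha b hb))
    have hsub : ((Finset.Icc 1 n).powersetCard 3).filter (fun t =>
          ¬ ∀ a ∈ t.powersetCard 2, ∀ b ∈ t.powersetCard 2, sameOrder (A ++ M ++ B) T a b) ⊆
        (((Finset.Icc 1 n).powersetCard 3).filter (fun t =>
          ¬ ∀ a ∈ t.powersetCard 2, ∀ b ∈ t.powersetCard 2,
            sameOrder (A ++ M' ++ B) T a b)) ∪ {t0} := by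
      intro t ht
      rw [Finset.mem_filter] at ht
      by_cases hne : t = t0
      · exact Finset.mem_union_right _ (by simp [hne])
      · exact Finset.mem_union_left _ (Finset.mem_filter.2 ⟨ht.1, (key t ht.1 hne).1 ht.2⟩)
    refine le_trans (Finset.card_le_card hsub) (le_trans (Finset.card_union_le _ _) ?_)
    simp
  · -- I22 equality
    rw [hw, hw', I22, I22]
    congr 1
    apply Finset.filter_congr
    intro P hP
    have hiff : (∀ a ∈ P, ∀ b ∈ P, a ≠ b → Disjoint a b) →
        ((∀ a ∈ P, ∀ b ∈ P, sameOrder (A ++ M ++ B) T a b) ↔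
         (∀ a ∈ P, ∀ b ∈ P, sameOrder (A ++ M' ++ B) T a b)) := by
      intro hd
      have body : ∀ a ∈ P, ∀ b ∈ P,
          (sameOrder (A ++ M ++ B) T a b ↔ sameOrder (A ++ M' ++ B) T a b) := by
        intro a ha b hb
        by_cases hab : a = b
        · subst hab; exact iff_of_true (sameOrder_refl _ _ _) (sameOrder_refl _ _ _)
        · apply sameOrder_inv hlen hmem hndw
          by_contra hc
          push_neg at hc
          exact common a hc.1 b hc.2 (hd a ha b hb hab)
      constructor
      · intro H a ha b hb; exact (body a ha b hb).1 (H a ha b hb)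
      · intro H a ha b hb; exact (body a ha b hb).2 (H a ha b hb)
    constructor
    · rintro ⟨h1, h2⟩; exact ⟨h1, fun hc => h2 ((hiff h1).2 hc)⟩
    · rintro ⟨h1, h2⟩; exact ⟨h1, fun hc => h2 ((hiff h1).1 hc)⟩

lemma stepII_bound (n : ℕ) (T : List (Finset ℕ)) {w w' : List ℕ} (h : StepII w w')
    (hnd : (names w).Nodup) :
    (names w').Perm (names w) ∧ I3 n (names w) T = I3 n (names w') T ∧
      I22 n (names w) T ≤ I22 n (names w') T + 1 := by
  obtain ⟨A, B, t1, t2, hdisj, hne1, hne2, hw, hw'⟩ := names_stepII h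
  set M : List (Finset ℕ) := [t1, t2] with hM
  set M' : List (Finset ℕ) := [t2, t1] with hM'
  have hlen : M.length = M'.length := rfl
  have hmem : ∀ y, y ∈ M ↔ y ∈ M' := by
    intro y; simp only [hM, hM', List.mem_cons, List.not_mem_nil, or_false]; tauto
  have hndw : (A ++ M ++ B).Nodup := by rw [← hw]; exact hnd
  have ht12 : t1 ≠ t2 := by
    intro hc
    rw [hc, disjoint_self] at hdisj
    exact Finset.not_nonempty_empty (hdisj ▸ hne2)
  have hperm : (names w').Perm (names w) := by
    rw [hw, hw']
    exact ((List.Perm.swap' _ _ (List.Perm.refl [])).append_left A).append_right B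
  refine ⟨hperm, ?_, ?_⟩
  · -- I3 equality
    rw [hw, hw', I3, I3]
    congr 1
    apply Finset.filter_congr
    intro t ht
    have htc : t.card = 3 := (Finset.mem_powersetCard.1 ht).2
    have body : ∀ a ∈ t.powersetCard 2, ∀ b ∈ t.powersetCard 2,
        (sameOrder (A ++ M ++ B) T a b ↔ sameOrder (A ++ M' ++ B) T a b) := by
      intro a ha b hb
      by_cases hab : a = b
      · subst hab; exact iff_of_true (sameOrder_refl _ _ _) (sameOrder_refl _ _ _)
      · apply sameOrder_inv hlen hmem hndw
        by_contra hc
        push_neg at hc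
        obtain ⟨ha2, hat⟩ := And.intro (Finset.mem_powersetCard.1 ha).2
          (Finset.mem_powersetCard.1 ha).1
        obtain ⟨hb2, hbt⟩ := And.intro (Finset.mem_powersetCard.1 hb).2
          (Finset.mem_powersetCard.1 hb).1
        have haM := hc.1
        have hbM := hc.2
        simp only [hM, List.mem_cons, List.not_mem_nil, or_false] at haM hbM
        have hcard4 : (a ∪ b).card = 4 := by
          rcases haM with rfl | rfl <;> rcases hbM with rfl | rfl
        -- cases
          · exact absurd rfl hab
          · rw [Finset.card_union_of_disjoint hdisj]; omega
          · rw [Finset.card_union_of_disjoint (Disjoint.symm hdisj)]; omega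
          · exact absurd rfl hab
        have : a ∪ b ⊆ t := Finset.union_subset hat hbt
        have := Finset.card_le_card this
        omega
    constructor
    · intro hcond hcontra
      exact hcond (fun a ha b hb => (body a ha b hb).2 (hcontra a ha b hb))
    · intro hcond hcontra
      exact hcond (fun a ha b hb => (body a ha b hb).1 (hcontra a ha b hb))
  · -- I22 bound
    rw [hw, hw', I22, I22]
    set P0 : Finset (Finset ℕ) := {t1, t2} with hP0
    have key : ∀ P ∈ ((Finset.Icc 1 n).powersetCard 2).powersetCard 2, P ≠ P0 →
        (((∀ a ∈ P, ∀ b ∈ P, a ≠ b → Disjoint a b) ∧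
          ¬ ∀ a ∈ P, ∀ b ∈ P, sameOrder (A ++ M ++ B) T a b) ↔
         ((∀ a ∈ P, ∀ b ∈ P, a ≠ b → Disjoint a b) ∧
          ¬ ∀ a ∈ P, ∀ b ∈ P, sameOrder (A ++ M' ++ B) T a b)) := by
      intro P hP hnP
      have hPc : P.card = 2 := (Finset.mem_powersetCard.1 hP).2
      have body : ∀ a ∈ P, ∀ b ∈ P,
          (sameOrder (A ++ M ++ B) T a b ↔ sameOrder (A ++ M' ++ B) T a b) := by
        intro a ha b hb
        by_cases hab : a = b
        · subst hab; exact iff_of_true (sameOrder_refl _ _ _) (sameOrder_refl _ _ _)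
        · apply sameOrder_inv hlen hmem hndw
          by_contra hc
          push_neg at hc
          have haM := hc.1
          have hbM := hc.2
          simp only [hM, List.mem_cons, List.not_mem_nil, or_false] at haM hbM
          have hsub : P0 ⊆ P := by
            intro z hz
            simp only [hP0, Finset.mem_insert, Finset.mem_singleton] at hz
            rcases haM with rfl | rfl <;> rcases hbM with rfl | rfl <;>
              first
              | exact absurd rfl hab
              | rcases hz with rfl | rfl <;> assumption
          have hP0c : P0.card = 2 := by
            rw [hP0, Finset.card_insert_of_notMem (by simp [ht12]), Finset.card_singleton]
          exact hnP (Finset.eq_of_subset_of_card_le hsub (by omega)).symm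
      constructor
      · rintro ⟨h1, h2⟩
        exact ⟨h1, fun hc => h2 (fun a ha b hb => (body a ha b hb).2 (hc a ha b hb))⟩
      · rintro ⟨h1, h2⟩
        exact ⟨h1, fun hc => h2 (fun a ha b hb => (body a ha b hb).1 (hc a ha b hb))⟩
    have hsub : (((Finset.Icc 1 n).powersetCard 2).powersetCard 2).filter (fun P =>
          (∀ a ∈ P, ∀ b ∈ P, a ≠ b → Disjoint a b) ∧
          ¬ ∀ a ∈ P, ∀ b ∈ P, sameOrder (A ++ M ++ B) T a b) ⊆
        ((((Finset.Icc 1 n).powersetCard 2).powersetCard 2).filter (fun P =>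
          (∀ a ∈ P, ∀ b ∈ P, a ≠ b → Disjoint a b) ∧
          ¬ ∀ a ∈ P, ∀ b ∈ P, sameOrder (A ++ M' ++ B) T a b)) ∪ {P0} := by
      intro P hPf
      rw [Finset.mem_filter] at hPf
      by_cases hnP : P = P0
      · exact Finset.mem_union_right _ (by simp [hnP])
      · exact Finset.mem_union_left _ (Finset.mem_filter.2 ⟨hPf.1, (key P hPf.1 hnP).1 hPf.2⟩)
    refine le_trans (Finset.card_le_card hsub) (le_trans (Finset.card_union_le _ _) ?_)
    simp


lemma chain_bound (n : ℕ) (T : List (Finset ℕ)) :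
    ∀ c : List (List ℕ), c.Chain' BraidStep →
      ∀ w z, c.head? = some w → c.getLast? = some z → (names w).Nodup →
      I3 n (names w) T + I22 n (names w) T ≤
        I3 n (names z) T + I22 n (names z) T + (c.length - 1) := by
  intro c
  induction c with
  | nil => intro _ w z hw; simp at hw
  | cons hd tl ih =>
    intro hch w z hw hz hnd
    have hdw : hd = w := by simpa using hw
    subst hdw
    cases tl with
    | nil =>
        have : hd = z := by simpa using hz
        subst this; simp
    | cons hd2 tl2 =>
        have hstep : BraidStep hd hd2 := (List.isChain_cons_cons.1 hch).1
        have hch2 : (hd2 :: tl2).Chain' BraidStep := (List.isChain_cons_cons.1 hch).2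
        have hz2 : (hd2 :: tl2).getLast? = some z := by
          rwa [List.getLast?_cons_cons] at hz
        have step : (names hd2).Nodup ∧
            I3 n (names hd) T + I22 n (names hd) T ≤
              I3 n (names hd2) T + I22 n (names hd2) T + 1 := by
          rcases hstep with h | h
          · obtain ⟨hperm, h3, h22⟩ := stepI_bound n T h hnd
            exact ⟨hperm.nodup_iff.2 hnd, by omega⟩
          · obtain ⟨hperm, h3, h22⟩ := stepII_bound n T h hnd
            exact ⟨hperm.nodup_iff.2 hnd, by omega⟩
        have := ih hch2 hd2 z rfl hz2 step.1
        have hlen : (hd :: hd2 :: tl2).length - 1 = ((hd2 :: tl2).length - 1) + 1 := by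
          simp
        omega

/-- reachability by braid steps -/
def Reach : List ℕ → List ℕ → Prop := Relation.ReflTransGen BraidStep

lemma reach_deriv {u v : List ℕ} (h : Reach u v) : ∃ c, IsDeriv u v c := by
  induction h with
  | refl => exact ⟨[u], List.isChain_singleton u, rfl, rfl⟩
  | tail hab hbc ih =>
      rename_i b fin
      obtain ⟨c, hc1, hc2, hc3⟩ := ih
      refine ⟨c ++ [fin], ?_, ?_, by simp⟩
      · apply hc1.append (List.isChain_singleton _)
        intro x hx y hy
        rw [hc3] at hx
        simp at hx hy
        subst hx; subst hy; exact hbc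
      · have hne : c ≠ [] := by intro hc; rw [hc] at hc2; simp at hc2
        rwa [List.head?_append_of_ne_nil _ hne]

lemma braidStep_append (p q : List ℕ) {x y : List ℕ} (h : BraidStep x y) :
    BraidStep (p ++ x ++ q) (p ++ y ++ q) := by
  rcases h with ⟨a, b, i, j, hij⟩ | ⟨a, b, i, j, hij⟩
  · left
    have := StepI.mk (p ++ a) (b ++ q) i j hij
    simpa [List.append_assoc] using this
  · right
    have := StepII.mk (p ++ a) (b ++ q) i j hij
    simpa [List.append_assoc] using this

lemma braidStep_shift {x y : List ℕ} (h : BraidStep x y) :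
    BraidStep (x.map (· + 1)) (y.map (· + 1)) := by
  rcases h with ⟨a, b, i, j, hij⟩ | ⟨a, b, i, j, hij⟩
  · left
    have := StepI.mk (a.map (· + 1)) (b.map (· + 1)) (i + 1) (j + 1) (by omega)
    simpa using this
  · right
    have := StepII.mk (a.map (· + 1)) (b.map (· + 1)) (i + 1) (j + 1) (by omega)
    simpa using this

lemma reach_append (p q : List ℕ) {x y : List ℕ} (h : Reach x y) :
    Reach (p ++ x ++ q) (p ++ y ++ q) := by
  induction h with
  | refl => exact Relation.ReflTransGen.refl
  | tail hab hbc ih => exact ih.tail (braidStep_append p q hbc)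

lemma reach_shift {x y : List ℕ} (h : Reach x y) :
    Reach (x.map (· + 1)) (y.map (· + 1)) := by
  induction h with
  | refl => exact Relation.ReflTransGen.refl
  | tail hab hbc ih => exact ih.tail (braidStep_shift hbc)

lemma reach_trans {x y z : List ℕ} (h1 : Reach x y) (h2 : Reach y z) : Reach x z :=
  Relation.ReflTransGen.trans h1 h2


lemma sji_succ (m : ℕ) : sji (m + 2) 1 = (m + 1) :: sji (m + 1) 1 := by
  have h1 : m + 2 - 1 = m + 1 := by omega
  have h2 : m + 1 - 1 = m := by omega
  simp only [sji, h1, h2, List.range_succ_eq_map, List.map_cons, List.map_map,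
    Nat.sub_zero]
  congr 1
  apply List.map_congr_left
  intro k _
  simp [Nat.succ_sub_succ]

lemma sji_mem {j i x : ℕ} (hx : x ∈ sji j i) : i ≤ x ∧ x + 1 ≤ j := by
  simp only [sji, List.mem_map, List.mem_range] at hx
  obtain ⟨k, hk, rfl⟩ := hx
  omega

lemma L0 : ∀ (w : List ℕ) (jj : ℕ), (∀ x ∈ w, x + 2 ≤ jj) → Reach (jj :: w) (w ++ [jj]) := by
  intro w
  induction w with
  | nil => intro jj _; exact Relation.ReflTransGen.refl
  | cons x w' ih =>
      intro jj hw
      have h1 : BraidStep (jj :: x :: w') (x :: jj :: w') := by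
        right
        have := StepII.mk [] w' jj x (Or.inr (hw x (by simp)))
        simpa using this
      have h2 : Reach (x :: jj :: w') (x :: (w' ++ [jj])) := by
        have := reach_append [x] [] (ih jj (fun y hy => hw y (by simp [hy])))
        simpa using this
      exact reach_trans (Relation.ReflTransGen.single h1) h2

lemma L1 : ∀ (m i : ℕ), 1 ≤ i → i + 1 ≤ m → Reach (i :: sji (m + 1) 1) (sji (m + 1) 1 ++ [i + 1]) := by
  intro m
  induction m with
  | zero => intro i h1 h2; omega
  | succ m ih =>
      intro i h1 h2
      by_cases hlt : i + 1 ≤ m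
      · -- commute past m+1
        rw [sji_succ]
        have hstep : BraidStep (i :: (m + 1) :: sji (m + 1) 1) ((m + 1) :: i :: sji (m + 1) 1) := by
          right
          have := StepII.mk [] (sji (m + 1) 1) i (m + 1) (Or.inl (by omega))
          simpa using this
        have h2' : Reach ((m + 1) :: i :: sji (m + 1) 1)
            ((m + 1) :: (sji (m + 1) 1 ++ [i + 1])) := by
          have := reach_append [m + 1] [] (ih i h1 hlt)
          simpa using this
        have : Reach (i :: (m + 1) :: sji (m + 1) 1)
            ((m + 1) :: (sji (m + 1) 1 ++ [i + 1])) :=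
          reach_trans (Relation.ReflTransGen.single hstep) h2'
        simpa using this
      · -- i = m, braid
        have him : i = m := by omega
        subst him
        have hi1 : i = (i - 1) + 1 := by omega
        have hunfold : sji (i + 1) 1 = i :: sji i 1 := by
          rw [hi1, sji_succ]
        rw [sji_succ, hunfold]
        have hstep : BraidStep (i :: (i + 1) :: i :: sji i 1)
            ((i + 1) :: i :: (i + 1) :: sji i 1) := by
          left
          have := StepI.mk [] (sji i 1) i (i + 1) (Or.inl rfl)
          simpa using this
        have h2' : Reach ((i + 1) :: i :: (i + 1) :: sji i 1)
            ((i + 1) :: i :: (sji i 1 ++ [i + 1]))  := by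
          have hlet : ∀ x ∈ sji i 1, x + 2 ≤ i + 1 := by
            intro x hx; have := sji_mem hx; omega
          have := reach_append [i + 1, i] [] (L0 (sji i 1) (i + 1) hlet)
          simpa using this
        have := reach_trans (Relation.ReflTransGen.single hstep) h2'
        simpa using this

lemma L2 : ∀ (w : List ℕ) (m : ℕ), (∀ x ∈ w, 1 ≤ x ∧ x + 1 ≤ m) →
    Reach (w ++ sji (m + 1) 1) (sji (m + 1) 1 ++ w.map (· + 1)) := by
  intro w
  induction w using List.reverseRecOn with
  | nil => intro m _; simp only [List.nil_append, List.map_nil, List.append_nil]; exact Relation.ReflTransGen.refl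
  | append_singleton w' x ih =>
      intro m hw
      have hx := hw x (by simp)
      have h1 : Reach ((w' ++ [x]) ++ sji (m + 1) 1) (w' ++ (sji (m + 1) 1 ++ [x + 1])) := by
        have := reach_append w' [] (L1 m x hx.1 hx.2)
        simpa using this
      have h2 : Reach ((w' ++ sji (m + 1) 1) ++ [x + 1])
          ((sji (m + 1) 1 ++ w'.map (· + 1)) ++ [x + 1]) := by
        have := reach_append [] [x + 1] (ih m (fun y hy => hw y (by simp [hy])))
        simpa using this
      have h1' : Reach ((w' ++ [x]) ++ sji (m + 1) 1)
          ((w' ++ sji (m + 1) 1) ++ [x + 1]) := by simpa [List.append_assoc] using h1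
      have := reach_trans h1' h2
      simpa [List.append_assoc] using this

lemma sji_shift (j i : ℕ) : sji (j + 1) (i + 1) = (sji j i).map (· + 1) := by
  simp only [sji, Nat.succ_sub_succ, List.map_map]
  apply List.map_congr_left
  intro k hk
  simp only [List.mem_range] at hk
  simp only [Function.comp_apply]
  omega

lemma uWord_succ (n : ℕ) : uWord (n + 1) = uWord n ++ sji (n + 1) 1 := by
  simp [uWord, List.range_succ]

lemma vWord_succ (n : ℕ) : vWord (n + 1) = sji (n + 1) 1 ++ (vWord n).map (· + 1) := by
  cases n with
  | zero => rfl
  | succ n' =>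
      show (((List.range (n' + 1)).map (fun k => sji (n' + 2) (k + 1))).flatten) = _
      rw [List.range_succ_eq_map]
      simp only [List.map_cons, List.map_map, List.flatten_cons]
      congr 1
      show _ = (vWord (n' + 1)).map (· + 1)
      have : vWord (n' + 1) = ((List.range n').map (fun k => sji (n' + 1) (k + 1))).flatten := by
        simp [vWord]
      rw [this, List.map_flatten, List.map_map]
      congr 1
      apply List.map_congr_left
      intro k hk
      simp only [Function.comp_apply]
      exact sji_shift (n' + 1) (k + 1)

lemma uWord_mem : ∀ n, ∀ x ∈ uWord n, 1 ≤ x ∧ x + 1 ≤ n := by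
  intro n
  induction n with
  | zero => intro x hx; simp [uWord] at hx
  | succ n ih =>
      intro x hx
      rw [uWord_succ] at hx
      rcases List.mem_append.1 hx with h | h
      · have := ih x h; omega
      · exact sji_mem h

lemma reach_uv : ∀ n, Reach (uWord n) (vWord n) := by
  intro n
  induction n with
  | zero => exact Relation.ReflTransGen.refl
  | succ n ih =>
      rw [uWord_succ, vWord_succ]
      have h1 : Reach (uWord n ++ sji (n + 1) 1) (sji (n + 1) 1 ++ (uWord n).map (· + 1)) :=
        L2 _ _ (uWord_mem n)
      have h2 : Reach (sji (n + 1) 1 ++ (uWord n).map (· + 1))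
          (sji (n + 1) 1 ++ (vWord n).map (· + 1)) := by
        have := reach_append (sji (n + 1) 1) [] (reach_shift ih)
        simpa using this
      exact reach_trans h1 h2

def flipFun (n x : ℕ) : ℕ := if 1 ≤ x ∧ x ≤ n then n + 1 - x else x

def flipPerm (n : ℕ) : Equiv.Perm ℕ :=
  ⟨flipFun n, flipFun n,
    fun x => by simp only [flipFun]; split_ifs <;> omega,
    fun x => by simp only [flipFun]; split_ifs <;> omega⟩

lemma flipPerm_apply (n x : ℕ) : flipPerm n x = flipFun n x := rfl
lemma flipPerm_inv_apply (n x : ℕ) : (flipPerm n)⁻¹ x = flipFun n x := rfl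

def sigFun (m x : ℕ) : ℕ := if 1 ≤ x ∧ x ≤ m then x + 1 else if x = m + 1 then 1 else x
def sigInv (m x : ℕ) : ℕ := if 2 ≤ x ∧ x ≤ m + 1 then x - 1 else if x = 1 then m + 1 else x

def sigPerm (m : ℕ) : Equiv.Perm ℕ :=
  ⟨sigFun m, sigInv m,
    fun x => by simp only [sigFun, sigInv]; split_ifs <;> omega,
    fun x => by simp only [sigFun, sigInv]; split_ifs <;> omega⟩

lemma sigPerm_apply (m x : ℕ) : sigPerm m x = sigFun m x := rfl

lemma sji_one : sji 1 1 = [] := rfl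

lemma wperm_sji : ∀ m, wperm (sji (m + 1) 1) = sigPerm m := by
  intro m
  induction m with
  | zero =>
      apply Equiv.ext; intro x
      show x = sigFun 0 x
      simp only [sigFun]; split_ifs <;> omega
  | succ m ih =>
      rw [sji_succ, wperm_cons, ih]
      apply Equiv.ext; intro x
      show sigPerm m (s (m + 1) x) = sigFun (m + 1) x
      rw [sigPerm_apply, s_apply]
      simp only [sigFun]
      split_ifs <;> omega

lemma wperm_u : ∀ n, wperm (uWord n) = flipPerm n := by
  intro n
  induction n with
  | zero =>
      apply Equiv.ext; intro x
      show x = flipFun 0 x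
      simp only [flipFun]; split_ifs <;> omega
  | succ n ih =>
      rw [uWord_succ, wperm_append, wperm_sji, ih]
      apply Equiv.ext; intro x
      show sigPerm n (flipPerm n x) = flipFun (n + 1) x
      rw [sigPerm_apply, flipPerm_apply]
      simp only [sigFun, flipFun]
      split_ifs <;> omega

lemma namesAux_sji : ∀ m, ∀ π : Equiv.Perm ℕ,
    namesAux π (sji (m + 1) 1) =
      (List.range m).map (fun j => ({π⁻¹ (m - j), π⁻¹ (m + 1)} : Finset ℕ)) := by
  intro m
  induction m with
  | zero => intro π; rfl
  | succ m ih =>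
      intro π
      rw [sji_succ, namesAux_cons, ih (s (m + 1) * π)]
      rw [List.range_succ_eq_map, List.map_cons, List.map_map]
      simp only [Nat.sub_zero]
      congr 1
      · apply List.map_congr_left
        intro j hj
        simp only [List.mem_range] at hj
        simp only [Function.comp_apply]
        have e1 : (s (m + 1) * π)⁻¹ (m - j) = π⁻¹ (m - j) := by
          rw [inv_mul_apply, s_inv, sval (m + 1) (m - j) (m - j) (by omega)]
        have e2 : (s (m + 1) * π)⁻¹ (m + 1) = π⁻¹ (m + 2) := by
          rw [inv_mul_apply, s_inv, sval (m + 1) (m + 1) (m + 2) (by omega)]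
        rw [e1, e2]
        have : m + 1 - (j + 1) = m - j := by omega
        rw [this]

lemma namesAux_shift (σ : Equiv.Perm ℕ) :
    ∀ (w : List ℕ) (ρ : Equiv.Perm ℕ), (∀ i ∈ w, σ i = i + 1 ∧ σ (i + 1) = i + 2) →
      namesAux (σ * ρ) (w.map (· + 1)) = namesAux ρ w := by
  intro w
  induction w with
  | nil => intro ρ _; rfl
  | cons i rest ih =>
      intro ρ hσ
      have hi := hσ i (by simp)
      rw [List.map_cons, namesAux_cons, namesAux_cons]
      have e1 : (σ * ρ)⁻¹ (i + 1) = ρ⁻¹ i := by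
        rw [inv_mul_apply, ← hi.1, Equiv.Perm.coe_inv σ, Equiv.symm_apply_apply]
      have e2 : (σ * ρ)⁻¹ (i + 1 + 1) = ρ⁻¹ (i + 1) := by
        rw [inv_mul_apply, show i + 1 + 1 = i + 2 by omega, ← hi.2, Equiv.Perm.coe_inv σ, Equiv.symm_apply_apply]
      rw [e1, e2]
      congr 1
      have hconj : s (i + 1) * σ = σ * s i := by
        have h1 : σ * s i * σ⁻¹ = Equiv.swap (σ i) (σ (i + 1)) := s_conj σ i
        rw [hi.1, hi.2] at h1
        have : σ * s i * σ⁻¹ = s (i + 1) := by rw [h1]; rfl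
        calc s (i + 1) * σ = (σ * s i * σ⁻¹) * σ := by rw [this]
        _ = σ * s i := by group
      rw [show s (i + 1) * (σ * ρ) = (s (i + 1) * σ) * ρ by group, hconj,
        show (σ * s i) * ρ = σ * (s i * ρ) by group]
      exact ih (s i * ρ) (fun x hx => hσ x (by simp [hx]))

def pairList (n : ℕ) : List (Finset ℕ) :=
  ((List.range n).map (fun m => (List.range m).map (fun k => ({k + 1, m + 1} : Finset ℕ)))).flatten

lemma pairList_succ (n : ℕ) :
    pairList (n + 1) = pairList n ++ (List.range n).map (fun k => ({k + 1, n + 1} : Finset ℕ)) := by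
  simp [pairList, List.range_succ]

lemma names_u : ∀ n, names (uWord n) = pairList n := by
  intro n
  induction n with
  | zero => rfl
  | succ n ih =>
      rw [uWord_succ, names, namesAux_append, mul_one, wperm_u, namesAux_sji n,
        pairList_succ, ← names, ih]
      congr 1
      apply List.map_congr_left
      intro j hj
      simp only [List.mem_range] at hj
      have e1 : (flipPerm n)⁻¹ (n - j) = j + 1 := by
        rw [flipPerm_inv_apply]; simp only [flipFun]; split_ifs <;> omega
      have e2 : (flipPerm n)⁻¹ (n + 1) = n + 1 := by
        rw [flipPerm_inv_apply]; simp only [flipFun]; split_ifs <;> omega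
      rw [e1, e2]

lemma rev_map_range {α : Type*} (f : ℕ → α) :
    ∀ m, ((List.range m).map f).reverse = (List.range m).map (fun j => f (m - 1 - j)) := by
  intro m
  induction m with
  | zero => rfl
  | succ m ih =>
      conv_lhs => rw [List.range_succ, List.map_append, List.reverse_append]
      conv_rhs => rw [List.range_succ_eq_map]
      simp only [List.map_cons, List.map_nil, List.reverse_cons, List.reverse_nil,
        List.nil_append, List.singleton_append, List.map_map]
      rw [ih, show m + 1 - 1 - 0 = m by omega]
      congr 1
      apply List.map_congr_left
      intro j hj
      simp only [Function.comp_apply]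
      rw [show m + 1 - 1 - (j + 1) = m - 1 - j by omega]

lemma vWord_mem (n : ℕ) : ∀ x ∈ vWord n, 1 ≤ x ∧ x + 1 ≤ n := by
  intro x hx
  simp only [vWord, List.mem_flatten, List.mem_map, List.mem_range] at hx
  obtain ⟨l, ⟨k, hk, rfl⟩, hxl⟩ := hx
  have := sji_mem hxl
  omega

lemma names_v : ∀ n, names (vWord n) = (pairList n).reverse := by
  intro n
  induction n with
  | zero => rfl
  | succ n ih =>
      rw [vWord_succ, names, namesAux_append, mul_one, wperm_sji, pairList_succ,
        List.reverse_append]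
      congr 1
      · rw [namesAux_sji n, rev_map_range]
        apply List.map_congr_left
        intro j hj
        simp only [List.mem_range] at hj
        have e1 : (1 : Equiv.Perm ℕ)⁻¹ (n - j) = n - j := rfl
        have e2 : (1 : Equiv.Perm ℕ)⁻¹ (n + 1) = n + 1 := rfl
        rw [e1, e2]
        congr 2
        omega
      · rw [show sigPerm n = sigPerm n * 1 by group]
        rw [namesAux_shift (sigPerm n) (vWord n) 1 ?_, ← names, ih]
        intro i hi
        have := vWord_mem n i hi
        constructor <;> · rw [sigPerm_apply]; simp only [sigFun]; split_ifs <;> omega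

lemma pairList_bound (n : ℕ) : ∀ a ∈ pairList n, ∀ y ∈ a, 1 ≤ y ∧ y ≤ n := by
  intro a ha y hy
  simp only [pairList, List.mem_flatten, List.mem_map, List.mem_range] at ha
  obtain ⟨l, ⟨m, hm, rfl⟩, hal⟩ := ha
  simp only [List.mem_map, List.mem_range] at hal
  obtain ⟨k, hk, rfl⟩ := hal
  simp only [Finset.mem_insert, Finset.mem_singleton] at hy
  rcases hy with rfl | rfl <;> omega

lemma pairList_nodup : ∀ n, (pairList n).Nodup := by
  intro n
  induction n with
  | zero => exact List.nodup_nil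
  | succ n ih =>
      rw [pairList_succ, List.nodup_append]
      refine ⟨ih, ?_, ?_⟩
      · apply List.Nodup.map_on ?_ List.nodup_range
        intro k hk k' hk' he
        simp only [List.mem_range] at hk hk'
        have : (k + 1) ∈ ({k' + 1, n + 1} : Finset ℕ) := by
          rw [← he]; exact Finset.mem_insert_self _ _
        simp only [Finset.mem_insert, Finset.mem_singleton] at this
        omega
      · intro a ha b hb
        simp only [List.mem_map, List.mem_range] at hb
        obtain ⟨k, hk, rfl⟩ := hb
        rintro rfl
        have := pairList_bound n _ ha (n + 1) (by simp)
        omega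

lemma mem_pairList {n : ℕ} {a : Finset ℕ} :
    a ∈ pairList n ↔ a ⊆ Finset.Icc 1 n ∧ a.card = 2 := by
  constructor
  · intro ha
    have hb := pairList_bound n a ha
    constructor
    · intro y hy
      have := hb y hy
      simp only [Finset.mem_Icc]
      omega
    · simp only [pairList, List.mem_flatten, List.mem_map, List.mem_range] at ha
      obtain ⟨l, ⟨m, hm, rfl⟩, hal⟩ := ha
      simp only [List.mem_map, List.mem_range] at hal
      obtain ⟨k, hk, rfl⟩ := hal
      rw [Finset.card_insert_of_notMem (by simp; omega), Finset.card_singleton]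
  · rintro ⟨hsub, hcard⟩
    obtain ⟨i, j, hij, rfl⟩ := Finset.card_eq_two.1 hcard
    have hi : 1 ≤ i ∧ i ≤ n := by
      have := hsub (Finset.mem_insert_self i {j}); simpa using this
    have hj : 1 ≤ j ∧ j ≤ n := by
      have := hsub (by simp : j ∈ ({i, j} : Finset ℕ)); simpa using this
    have key : ∀ x y : ℕ, 1 ≤ x → x < y → y ≤ n → ({x, y} : Finset ℕ) ∈ pairList n := by
      intro x y h1 h2 h3
      simp only [pairList, List.mem_flatten, List.mem_map, List.mem_range]
      refine ⟨_, ⟨y - 1, by omega, rfl⟩, ?_⟩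
      simp only [List.mem_map, List.mem_range]
      refine ⟨x - 1, by omega, ?_⟩
      rw [show x - 1 + 1 = x by omega, show y - 1 + 1 = y by omega]
    rcases lt_or_gt_of_ne hij with h | h
    · exact key i j hi.1 h hj.2
    · rw [Finset.pair_comm]
      exact key j i hj.1 h hi.2

lemma indexOf_reverse {α : Type*} [DecidableEq α] {S : List α} (hnd : S.Nodup) {x : α}
    (hx : x ∈ S) : S.reverse.idxOf x = S.length - 1 - S.idxOf x := by
  have hi : S.idxOf x < S.length := List.idxOf_lt_length_iff.2 hx
  have hrev : S.reverse.Nodup := List.nodup_reverse.2 hnd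
  have hk : S.length - 1 - S.idxOf x < S.reverse.length := by
    rw [List.length_reverse]; omega
  have hget : S.reverse[S.length - 1 - S.idxOf x]'hk = x := by
    rw [List.getElem_reverse]
    have he : S.length - 1 - (S.length - 1 - S.idxOf x) = S.idxOf x := by omega
    simp only [he]
    exact List.getElem_idxOf hi
  have h2 := List.Nodup.idxOf_getElem hrev _ hk
  rw [hget] at h2
  exact h2

lemma not_sameOrder_rev {S : List (Finset ℕ)} (hnd : S.Nodup) {a b : Finset ℕ}
    (ha : a ∈ S) (hb : b ∈ S) (hab : a ≠ b) : ¬ sameOrder S S.reverse a b := by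
  intro h
  unfold sameOrder at h
  rw [indexOf_reverse hnd ha, indexOf_reverse hnd hb] at h
  have hia : S.idxOf a < S.length := List.idxOf_lt_length_iff.2 ha
  have hib : S.idxOf b < S.length := List.idxOf_lt_length_iff.2 hb
  have hne : S.idxOf a ≠ S.idxOf b := fun he => hab ((List.idxOf_inj ha).1 he)
  rcases Nat.lt_or_ge (S.idxOf a) (S.idxOf b) with hl | hl
  · have := h.1 hl; omega
  · have hgt : S.idxOf b < S.idxOf a := by omega
    have := h.2 (by omega); omega

lemma I3_eval (n : ℕ) : I3 n (pairList n) (pairList n).reverse = n.choose 3 := by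
  rw [I3]
  rw [Finset.filter_true_of_mem]
  · rw [Finset.card_powersetCard, Nat.card_Icc]
    norm_num
  · intro t ht hall
    rw [Finset.mem_powersetCard] at ht
    obtain ⟨x, y, z, hxy, hxz, hyz, rfl⟩ := Finset.card_eq_three.1 ht.2
    have hsubxy : ({x, y} : Finset ℕ) ∈ ({x, y, z} : Finset ℕ).powersetCard 2 := by
      rw [Finset.mem_powersetCard]
      constructor
      · intro w hw; simp only [Finset.mem_insert, Finset.mem_singleton] at hw ⊢; tauto
      · rw [Finset.card_insert_of_notMem (by simp [hxy]), Finset.card_singleton]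
    have hsubxz : ({x, z} : Finset ℕ) ∈ ({x, y, z} : Finset ℕ).powersetCard 2 := by
      rw [Finset.mem_powersetCard]
      constructor
      · intro w hw; simp only [Finset.mem_insert, Finset.mem_singleton] at hw ⊢; tauto
      · rw [Finset.card_insert_of_notMem (by simp [hxz]), Finset.card_singleton]
    have hmem : ∀ a : Finset ℕ, a ∈ ({x, y, z} : Finset ℕ).powersetCard 2 → a ∈ pairList n := by
      intro a haP
      rw [Finset.mem_powersetCard] at haP
      exact mem_pairList.2 ⟨haP.1.trans ht.1, haP.2⟩
    have hne : ({x, y} : Finset ℕ) ≠ ({x, z} : Finset ℕ) := by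
      intro he
      have : y ∈ ({x, z} : Finset ℕ) := by rw [← he]; simp
      simp only [Finset.mem_insert, Finset.mem_singleton] at this
      tauto
    exact not_sameOrder_rev (pairList_nodup n) (hmem _ hsubxy) (hmem _ hsubxz) hne
      (hall _ hsubxy _ hsubxz)

lemma choose_identity (n : ℕ) : n.choose 2 * (n - 2).choose 2 = 6 * n.choose 4 := by
  have key : n.descFactorial 2 * (n - 2).descFactorial 2 = n.descFactorial 4 := by
    rcases Nat.lt_or_ge n 4 with h | h
    · interval_cases n <;> decide
    · obtain ⟨m, rfl⟩ := Nat.exists_eq_add_of_le h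
      simp only [Nat.descFactorial_succ, Nat.descFactorial_zero]
      rw [show 4 + m - 1 = m + 3 by omega, show 4 + m - 0 = m + 4 by omega,
        show 4 + m - 2 = m + 2 by omega, show m + 2 - 1 = m + 1 by omega,
        show m + 2 - 0 = m + 2 by omega, show 4 + m - 3 = m + 1 by omega]
      ring
  rw [Nat.descFactorial_eq_factorial_mul_choose n 2,
    Nat.descFactorial_eq_factorial_mul_choose (n - 2) 2,
    Nat.descFactorial_eq_factorial_mul_choose n 4] at key
  have h2 : Nat.factorial 2 = 2 := rfl
  have h4 : Nat.factorial 4 = 24 := rfl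
  rw [h2, h4] at key
  have key2 : 4 * (n.choose 2 * ((n - 2).choose 2)) = 4 * (6 * n.choose 4) := by
    calc 4 * (n.choose 2 * ((n - 2).choose 2))
        = 2 * n.choose 2 * (2 * ((n - 2).choose 2)) := by ring
      _ = 24 * n.choose 4 := key
      _ = 4 * (6 * n.choose 4) := by ring
  exact Nat.eq_of_mul_eq_mul_left (by norm_num) key2

lemma I22_eval (n : ℕ) : I22 n (pairList n) (pairList n).reverse = 3 * n.choose 4 := by
  classical
  set P2 := (Finset.Icc 1 n).powersetCard 2 with hP2
  have hP2card : P2.card = n.choose 2 := by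
    rw [hP2, Finset.card_powersetCard, Nat.card_Icc]; norm_num
  have hmemP2 : ∀ a, a ∈ P2 ↔ (a ⊆ Finset.Icc 1 n ∧ a.card = 2) := by
    intro a; rw [hP2, Finset.mem_powersetCard]
  rw [I22]
  have hcongr : (P2.powersetCard 2).filter (fun P =>
      (∀ a ∈ P, ∀ b ∈ P, a ≠ b → Disjoint a b) ∧
      ¬ ∀ a ∈ P, ∀ b ∈ P, sameOrder (pairList n) (pairList n).reverse a b) =
      (P2.powersetCard 2).filter (fun P => ∀ a ∈ P, ∀ b ∈ P, a ≠ b → Disjoint a b) := by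
    apply Finset.filter_congr
    intro P hP
    rw [Finset.mem_powersetCard] at hP
    constructor
    · exact fun h => h.1
    · intro hd
      refine ⟨hd, ?_⟩
      obtain ⟨a, b, hab, rfl⟩ := Finset.card_eq_two.1 hP.2
      have ha2 := (hmemP2 a).1 (hP.1 (by simp))
      have hb2 := (hmemP2 b).1 (hP.1 (by simp))
      intro hall
      exact not_sameOrder_rev (pairList_nodup n) (mem_pairList.2 ha2) (mem_pairList.2 hb2) hab
        (hall a (by simp) b (by simp))
  rw [hcongr]
  set F := (P2.powersetCard 2).filter (fun P => ∀ a ∈ P, ∀ b ∈ P, a ≠ b → Disjoint a b) with hF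
  set G := (P2 ×ˢ P2).filter (fun x => Disjoint x.1 x.2) with hG
  have hP2ne : ∀ a ∈ P2, a.Nonempty := by
    intro a ha
    rw [← Finset.card_pos, ((hmemP2 a).1 ha).2]; omega
  have hGne : ∀ x ∈ G, x.1 ≠ x.2 := by
    intro x hx
    rw [hG, Finset.mem_filter, Finset.mem_product] at hx
    intro he
    have hne := hP2ne x.1 hx.1.1
    have hd := hx.2
    rw [he, disjoint_self] at hd
    rw [he, hd] at hne
    exact Finset.not_nonempty_empty hne
  have hcover : ∀ x ∈ G, ({x.1, x.2} : Finset (Finset ℕ)) ∈ F := by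
    intro x hx
    have hne := hGne x hx
    rw [hG, Finset.mem_filter, Finset.mem_product] at hx
    rw [hF, Finset.mem_filter]
    refine ⟨Finset.mem_powersetCard.2 ⟨?_, ?_⟩, ?_⟩
    · intro c hc; simp only [Finset.mem_insert, Finset.mem_singleton] at hc
      rcases hc with rfl | rfl
      exacts [hx.1.1, hx.1.2]
    · rw [Finset.card_insert_of_notMem (by simp [hne]), Finset.card_singleton]
    · intro c hc d hd hcd
      simp only [Finset.mem_insert, Finset.mem_singleton] at hc hd
      rcases hc with rfl | rfl <;> rcases hd with rfl | rfl
      · exact absurd rfl hcd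
      · exact hx.2
      · exact hx.2.symm
      · exact absurd rfl hcd
  have hfib : ∀ P ∈ F, (G.filter (fun x => ({x.1, x.2} : Finset (Finset ℕ)) = P)).card = 2 := by
    intro P hPF
    rw [hF, Finset.mem_filter] at hPF
    obtain ⟨hPD, hdisj⟩ := hPF
    rw [Finset.mem_powersetCard] at hPD
    obtain ⟨a, b, hab, rfl⟩ := Finset.card_eq_two.1 hPD.2
    have ha : a ∈ P2 := hPD.1 (by simp)
    have hb : b ∈ P2 := hPD.1 (by simp)
    have hd : Disjoint a b := hdisj a (by simp) b (by simp) hab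
    have heq : G.filter (fun x => ({x.1, x.2} : Finset (Finset ℕ)) = {a, b}) =
        {(a, b), (b, a)} := by
      ext x
      simp only [Finset.mem_filter, Finset.mem_insert, Finset.mem_singleton]
      constructor
      · rintro ⟨hxG, hxP⟩
        have hx12 := hGne x hxG
        have h1 : x.1 ∈ ({a, b} : Finset (Finset ℕ)) := by rw [← hxP]; simp
        have h2 : x.2 ∈ ({a, b} : Finset (Finset ℕ)) := by rw [← hxP]; simp
        simp only [Finset.mem_insert, Finset.mem_singleton] at h1 h2
        rcases h1 with h1 | h1 <;> rcases h2 with h2 | h2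
        · exact absurd (h1.trans h2.symm) hx12
        · left; exact Prod.ext h1 h2
        · right; exact Prod.ext h1 h2
        · exact absurd (h1.trans h2.symm) hx12
      · rintro (rfl | rfl)
        · exact ⟨Finset.mem_filter.2 ⟨Finset.mem_product.2 ⟨ha, hb⟩, hd⟩, rfl⟩
        · exact ⟨Finset.mem_filter.2 ⟨Finset.mem_product.2 ⟨hb, ha⟩, hd.symm⟩,
            Finset.pair_comm b a⟩
    rw [heq, Finset.card_insert_of_notMem, Finset.card_singleton]
    simp only [Finset.mem_singleton, Prod.mk.injEq, not_and]
    intro h _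
    exact hab h
  have hGcard2 : G.card = 2 * F.card := by
    rw [Finset.card_eq_sum_card_fiberwise hcover, Finset.sum_congr rfl hfib,
      Finset.sum_const, smul_eq_mul, mul_comm]
  have hGfst : ∀ x ∈ G, x.1 ∈ P2 :=
    fun x hx => (Finset.mem_product.1 (Finset.mem_filter.1 hx).1).1
  have hfib2 : ∀ a ∈ P2, (G.filter (fun x => x.1 = a)).card = (n - 2).choose 2 := by
    intro a ha
    have hbij : (G.filter (fun x => x.1 = a)).card =
        (P2.filter (fun b => Disjoint a b)).card := by
      apply Finset.card_bij (fun x _ => x.2)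
      · intro x hx
        rw [Finset.mem_filter] at hx
        obtain ⟨hxG, hx1⟩ := hx
        rw [hG, Finset.mem_filter, Finset.mem_product] at hxG
        rw [Finset.mem_filter]
        exact ⟨hxG.1.2, hx1 ▸ hxG.2⟩
      · intro x hx y hy hxy
        rw [Finset.mem_filter] at hx hy
        exact Prod.ext (hx.2.trans hy.2.symm) hxy
      · intro b hbf
        rw [Finset.mem_filter] at hbf
        refine ⟨(a, b), Finset.mem_filter.2 ⟨Finset.mem_filter.2
          ⟨Finset.mem_product.2 ⟨ha, hbf.1⟩, hbf.2⟩, rfl⟩, rfl⟩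
    rw [hbij]
    have hset : P2.filter (fun b => Disjoint a b) =
        (Finset.Icc 1 n \ a).powersetCard 2 := by
      ext b
      rw [Finset.mem_filter, hmemP2, Finset.mem_powersetCard, Finset.subset_sdiff]
      constructor
      · rintro ⟨⟨h1, h2⟩, h3⟩; exact ⟨⟨h1, h3.symm⟩, h2⟩
      · rintro ⟨⟨h1, h3⟩, h2⟩; exact ⟨⟨h1, h2⟩, h3.symm⟩
    rw [hset, Finset.card_powersetCard, Finset.card_sdiff_of_subset ((hmemP2 a).1 ha).1,
      Nat.card_Icc, ((hmemP2 a).1 ha).2]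
    congr 1
  have hGcard : G.card = n.choose 2 * ((n - 2).choose 2) := by
    rw [Finset.card_eq_sum_card_fiberwise hGfst, Finset.sum_congr rfl hfib2,
      Finset.sum_const, smul_eq_mul, hP2card]
  have := choose_identity n
  omega


/-- For the flip expressions `u_n`, `v_n`: `I₃ = C(n,3)`, `I₂,₂ = 3·C(n,4)`, hence
`dist(u_n, v_n) ≥ C(n,3) + 3·C(n,4)` (which is `n⁴/8 + O(n³)`). -/
theorem flip_distance_lower_bound (n : ℕ) :
    I3 n (names (uWord n)) (names (vWord n)) = n.choose 3 ∧
    I22 n (names (uWord n)) (names (vWord n)) = 3 * n.choose 4 ∧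
    dist (uWord n) (vWord n) ≥ n.choose 3 + 3 * n.choose 4 := by
  have hu : names (uWord n) = pairList n := names_u n
  have hv : names (vWord n) = (pairList n).reverse := names_v n
  have h1 : I3 n (names (uWord n)) (names (vWord n)) = n.choose 3 := by
    rw [hu, hv]; exact I3_eval n
  have h2 : I22 n (names (uWord n)) (names (vWord n)) = 3 * n.choose 4 := by
    rw [hu, hv]; exact I22_eval n
  refine ⟨h1, h2, ?_⟩
  have hself3 : I3 n (names (vWord n)) (names (vWord n)) = 0 := by
    rw [I3, Finset.card_eq_zero, Finset.filter_eq_empty_iff]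
    intro t _ h
    exact h (fun a _ b _ => Iff.rfl)
  have hself22 : I22 n (names (vWord n)) (names (vWord n)) = 0 := by
    rw [I22, Finset.card_eq_zero, Finset.filter_eq_empty_iff]
    intro P _ h
    exact h.2 (fun a _ b _ => Iff.rfl)
  have hnd : (names (uWord n)).Nodup := by rw [hu]; exact pairList_nodup n
  have hbound : ∀ k ∈ {k | ∃ c, IsDeriv (uWord n) (vWord n) c ∧ c.length = k + 1},
      n.choose 3 + 3 * n.choose 4 ≤ k := by
    rintro k ⟨c, ⟨hch, hh, hl⟩, hlen⟩
    have hcb := chain_bound n (names (vWord n)) c hch (uWord n) (vWord n) hh hl hnd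
    rw [hlen] at hcb
    omega
  have hne : Set.Nonempty {k | ∃ c, IsDeriv (uWord n) (vWord n) c ∧ c.length = k + 1} := by
    obtain ⟨c, hc⟩ := reach_deriv (reach_uv n)
    have hclen : c.length ≠ 0 := by
      intro h0
      have := hc.2.1
      rw [List.length_eq_zero_iff.1 h0] at this
      simp at this
    exact ⟨c.length - 1, c, hc, by omega⟩
  exact le_csInf hne hbound

end
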